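/- Let X be a Banach space, 𝔄 a norm-closed subalgebra of L(X), and x₀ ∈ X a nonzero vector. The following are equivalent: (1) x₀ is strictly cyclic for 𝔄, i.e. 𝔄x₀ = X; (2) there is a constant C > 0 such that for every y in the closed unit ball of X there is an operator A ∈ 𝔄 with ‖A‖ ≤ C and Ax₀ = y; (3) there exist C > 0 and 0 < ε < 1 such that for every y in the closed unit ball of X there is an operator A ∈ 𝔄 with ‖A‖ ≤ C and ‖y − Ax₀‖ < ε. -/

import Mathlib

open Metric Filter

-- (3) → (1), the iteration lemma
lemma aux_31 {𝕜 X : Type*} [RCLike 𝕜]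
    [NormedAddCommGroup X] [NormedSpace 𝕜 X] [CompleteSpace X]
    (𝔄 : NonUnitalSubalgebra 𝕜 (X →L[𝕜] X))
    (hclosed : IsClosed (𝔄 : Set (X →L[𝕜] X)))
    (x₀ : X) {C ε : ℝ} (hC : 0 < C) (hε0 : 0 < ε) (hε1 : ε < 1)
    (h : ∀ y ∈ Metric.closedBall (0 : X) 1, ∃ A ∈ 𝔄, ‖A‖ ≤ C ∧ ‖y - A x₀‖ < ε)
    (y : X) (hy : ‖y‖ ≤ 1) : ∃ A ∈ 𝔄, A x₀ = y := by
  classical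
  haveI : CompleteSpace ↥𝔄.toSubmodule := hclosed.completeSpace_coe
  have h' : ∀ v : X, ∃ A ∈ 𝔄, ‖A‖ ≤ C ∧ (‖v‖ ≤ 1 → ‖v - A x₀‖ ≤ ε) := by
    intro v
    by_cases hv : ‖v‖ ≤ 1
    · obtain ⟨A, hA, hAn, hAx⟩ := h v (by simpa [Metric.mem_closedBall, dist_eq_norm] using hv)
      exact ⟨A, hA, hAn, fun _ => hAx.le⟩
    · exact ⟨0, zero_mem _, by simpa using hC.le, fun hv' => absurd hv' hv⟩
  choose F hFmem hFnorm hFapprox using h'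
  have hεn : ∀ n : ℕ, (0:ℝ) < ε ^ n := fun n => pow_pos hε0 n
  have hcast : ∀ n : ℕ, ‖((ε:𝕜))^n‖ = ε ^ n := by
    intro n; rw [norm_pow, RCLike.norm_ofReal, abs_of_pos hε0]
  have hcne : ∀ n : ℕ, ((ε:𝕜))^n ≠ 0 := by
    intro n
    apply pow_ne_zero
    exact_mod_cast hε0.ne'
  obtain ⟨r, hr0, hrsucc'⟩ : ∃ r : ℕ → X, r 0 = y ∧
      ∀ n, r (n+1) = r n - (((ε:𝕜)^n) • F (((ε:𝕜)^n)⁻¹ • r n)) x₀ :=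
    ⟨fun n => Nat.rec y (fun n rn => rn - (((ε:𝕜)^n) • F (((ε:𝕜)^n)⁻¹ • rn)) x₀) n,
      rfl, fun n => rfl⟩
  set a : ℕ → X →L[𝕜] X := fun n => ((ε:𝕜)^n) • F (((ε:𝕜)^n)⁻¹ • r n) with ha
  have hrsucc : ∀ n, r (n + 1) = r n - a n x₀ := hrsucc'
  have hrn : ∀ n, ‖r n‖ ≤ ε ^ n := by
    intro n
    induction n with
    | zero => simpa [hr0] using hy
    | succ n ih =>
      have hv : ‖((ε:𝕜)^n)⁻¹ • r n‖ ≤ 1 := by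
        rw [norm_smul, norm_inv, hcast, inv_mul_le_iff₀ (hεn n), mul_one]
        exact ih
      have key : r (n + 1) = ((ε:𝕜)^n) • ((((ε:𝕜)^n)⁻¹ • r n) -
          F (((ε:𝕜)^n)⁻¹ • r n) x₀) := by
        rw [hrsucc n, smul_sub, smul_inv_smul₀ (hcne n)]
        simp [ha, ContinuousLinearMap.smul_apply]
      rw [key, norm_smul, hcast, pow_succ]
      exact mul_le_mul_of_nonneg_left (hFapprox _ hv) (hεn n).le
  have hamem : ∀ n, a n ∈ 𝔄 := fun n => SMulMemClass.smul_mem _ (hFmem _)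
  have hanorm : ∀ n, ‖a n‖ ≤ C * ε ^ n := by
    intro n
    rw [ha]
    calc ‖((ε:𝕜)^n) • F (((ε:𝕜)^n)⁻¹ • r n)‖
        = ‖((ε:𝕜)^n)‖ * ‖F (((ε:𝕜)^n)⁻¹ • r n)‖ :=
          norm_smul ((ε:𝕜)^n) (F (((ε:𝕜)^n)⁻¹ • r n))
      _ = ε ^ n * ‖F (((ε:𝕜)^n)⁻¹ • r n)‖ := by rw [hcast]
      _ ≤ ε ^ n * C := mul_le_mul_of_nonneg_left (hFnorm _) (hεn n).le
      _ = C * ε ^ n := mul_comm _ _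
  -- summability in the closed submodule
  set a' : ℕ → ↥𝔄.toSubmodule := fun n => ⟨a n, hamem n⟩ with ha'
  have hgeo : Summable (fun n : ℕ => C * ε ^ n) :=
    (summable_geometric_of_lt_one hε0.le hε1).mul_left C
  have hsum' : Summable a' := by
    apply Summable.of_norm_bounded hgeo
    intro n
    simpa using hanorm n
  set A' : ↥𝔄.toSubmodule := ∑' n, a' n with hA'
  refine ⟨(A' : X →L[𝕜] X), A'.2, ?_⟩
  set g : ↥𝔄.toSubmodule →L[𝕜] X :=
    (ContinuousLinearMap.apply 𝕜 X x₀).comp 𝔄.toSubmodule.subtypeL with hg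
  have hgA : g A' = ∑' n, a n x₀ := by
    rw [hA', g.map_tsum hsum']
    rfl
  have hsum2 : Summable (fun n => a n x₀) := by
    apply Summable.of_norm_bounded (g := fun n => (C * ‖x₀‖) * ε ^ n)
    · simpa [mul_assoc, mul_comm, mul_left_comm] using
        (summable_geometric_of_lt_one hε0.le hε1).mul_left (C * ‖x₀‖)
    · intro n
      calc ‖a n x₀‖ ≤ ‖a n‖ * ‖x₀‖ := (a n).le_opNorm x₀
        _ ≤ C * ε ^ n * ‖x₀‖ := mul_le_mul_of_nonneg_right (hanorm n) (norm_nonneg _)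
        _ = (C * ‖x₀‖) * ε ^ n := by ring
  have hpartial : ∀ n, ∑ k ∈ Finset.range n, a k x₀ = y - r n := by
    intro n; induction n with
    | zero => simp [hr0]
    | succ n ih => rw [Finset.sum_range_succ, ih, hrsucc n]; abel
  have hrlim : Tendsto r atTop (nhds 0) := by
    have : Tendsto (fun n : ℕ => ε ^ n) atTop (nhds 0) :=
      tendsto_pow_atTop_nhds_zero_of_lt_one hε0.le hε1
    exact squeeze_zero_norm hrn this
  have htend : Tendsto (fun n => ∑ k ∈ Finset.range n, a k x₀) atTop (nhds y) := by
    simp only [hpartial]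
    simpa using Tendsto.const_sub y hrlim
  have : (∑' n, a n x₀) = y :=
    tendsto_nhds_unique hsum2.hasSum.tendsto_sum_nat htend
  rw [show ((A' : X →L[𝕜] X)) x₀ = g A' from rfl, hgA, this]

theorem stmt_1 {𝕜 X : Type*} [RCLike 𝕜]
    [NormedAddCommGroup X] [NormedSpace 𝕜 X] [CompleteSpace X]
    (𝔄 : NonUnitalSubalgebra 𝕜 (X →L[𝕜] X))
    (hclosed : IsClosed (𝔄 : Set (X →L[𝕜] X)))
    (x₀ : X) (hx₀ : x₀ ≠ 0) :
    List.TFAE [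
      ∀ y : X, ∃ A ∈ 𝔄, A x₀ = y,
      ∃ C > 0, ∀ y ∈ Metric.closedBall (0 : X) 1, ∃ A ∈ 𝔄, ‖A‖ ≤ C ∧ A x₀ = y,
      ∃ C > 0, ∃ ε : ℝ, 0 < ε ∧ ε < 1 ∧
        ∀ y ∈ Metric.closedBall (0 : X) 1, ∃ A ∈ 𝔄, ‖A‖ ≤ C ∧ ‖y - A x₀‖ < ε] := by
  tfae_have 1 → 2 := by
    intro h1
    haveI : CompleteSpace ↥𝔄.toSubmodule := hclosed.completeSpace_coe
    set g : ↥𝔄.toSubmodule →L[𝕜] X :=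
      (ContinuousLinearMap.apply 𝕜 X x₀).comp 𝔄.toSubmodule.subtypeL with hg
    have hsurj : Function.Surjective g := by
      intro y
      obtain ⟨A, hA, hAx⟩ := h1 y
      exact ⟨⟨A, hA⟩, hAx⟩
    obtain ⟨C, hC, hCy⟩ := ContinuousLinearMap.exists_preimage_norm_le (𝕜 := 𝕜) (𝕜' := 𝕜) (σ := RingHom.id 𝕜) (E := ↥𝔄.toSubmodule) (F := X) g hsurj
    refine ⟨C, hC, fun y hy => ?_⟩
    obtain ⟨A, hgA, hAn⟩ := hCy y
    refine ⟨(A : X →L[𝕜] X), A.2, ?_, hgA⟩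
    have hy1 : ‖y‖ ≤ 1 := by simpa [Metric.mem_closedBall, dist_eq_norm] using hy
    calc ‖(A : X →L[𝕜] X)‖ = ‖A‖ := rfl
      _ ≤ C * ‖y‖ := hAn
      _ ≤ C * 1 := mul_le_mul_of_nonneg_left hy1 hC.le
      _ = C := mul_one C
  tfae_have 2 → 3 := by
    rintro ⟨C, hC, h⟩
    refine ⟨C, hC, 1/2, by norm_num, by norm_num, fun y hy => ?_⟩
    obtain ⟨A, hA, hAn, hAx⟩ := h y hy
    exact ⟨A, hA, hAn, by simp [hAx]⟩
  tfae_have 3 → 1 := by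
    rintro ⟨C, hC, ε, hε0, hε1, h⟩ y
    rcases eq_or_ne y 0 with rfl | hy
    · exact ⟨0, zero_mem _, by simp⟩
    · have hny : (0:ℝ) < ‖y‖ := norm_pos_iff.mpr hy
      obtain ⟨A, hA, hAx⟩ := aux_31 𝔄 hclosed x₀ hC hε0 hε1 h ((‖y‖:𝕜)⁻¹ • y)
        (by rw [norm_smul, norm_inv, RCLike.norm_ofReal, abs_of_pos hny,
              inv_mul_cancel₀ hny.ne'])
      refine ⟨(‖y‖ : 𝕜) • A, SMulMemClass.smul_mem _ hA, ?_⟩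
      have : ((‖y‖:𝕜) • A) x₀ = (‖y‖:𝕜) • (A x₀) := rfl
      rw [this, hAx, smul_inv_smul₀ (by exact_mod_cast hny.ne')]
  tfae_finish
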